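/- arXiv:2603.27804 — 8 statements merged into one kernel-verified Lean document; each statement's English description precedes it below -/
import Mathlib

section
/- If x is a fixed point of the scaled softmax S_β, then the components of x take at most two distinct values. (Equivalently: the map t ↦ exp(βt)/Z − t, with Z = Σ_i exp(β x_i) fixed, has at most two zeros, by strict convexity of the exponential.) -/
open Real Finset

noncomputable def softmax (n : ℕ) (β : ℝ) (x : Fin n → ℝ) : Fin n → ℝ :=
  fun j => Real.exp (β * x j) / ∑ i, Real.exp (β * x i)

lemma key_no_three (β Z : ℝ) (hβ : 0 < β) {a b c : ℝ} (hab : a < b) (hbc : b < c)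
    (ha : Real.exp (β * a) = Z * a) (hb : Real.exp (β * b) = Z * b)
    (hc : Real.exp (β * c) = Z * c) : False := by
  set lam := (c - b) / (c - a) with hlam
  have h1 : 0 < c - a := by linarith
  have hl0 : 0 < lam := div_pos (by linarith) h1
  have hl1 : lam < 1 := by rw [hlam, div_lt_one h1]; linarith
  have hcomb : lam * a + (1 - lam) * c = b := by
    rw [hlam]; field_simp; ring
  have hne : β * a ≠ β * c := by
    have : a ≠ c := by linarith
    exact fun h => this (mul_left_cancel₀ (ne_of_gt hβ) h)
  have hconv := strictConvexOn_exp.2 (Set.mem_univ (β * a)) (Set.mem_univ (β * c))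
    hne hl0 (by linarith : (0:ℝ) < 1 - lam) (by ring)
  rw [smul_eq_mul, smul_eq_mul, smul_eq_mul, smul_eq_mul] at hconv
  have harg : lam * (β * a) + (1 - lam) * (β * c) = β * b := by
    rw [← hcomb]; ring
  rw [harg, hb, ha, hc] at hconv
  have : Z * b < Z * b := by
    calc Z * b < lam * (Z * a) + (1 - lam) * (Z * c) := hconv
    _ = Z * (lam * a + (1 - lam) * c) := by ring
    _ = Z * b := by rw [hcomb]
  exact lt_irrefl _ this

lemma roots_eq (β Z : ℝ) (hβ : 0 < β) {a b c : ℝ}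
    (ha : Real.exp (β * a) = Z * a) (hb : Real.exp (β * b) = Z * b)
    (hc : Real.exp (β * c) = Z * c) : a = b ∨ a = c ∨ b = c := by
  by_contra h
  push_neg at h
  obtain ⟨h1, h2, h3⟩ := h
  rcases lt_trichotomy a b with hab | hab | hab
  · rcases lt_trichotomy b c with hbc | hbc | hbc
    · exact key_no_three β Z hβ hab hbc ha hb hc
    · exact h3 hbc
    · rcases lt_trichotomy a c with hac | hac | hac
      · exact key_no_three β Z hβ hac hbc ha hc hb
      · exact h2 hac
      · exact key_no_three β Z hβ hac hab hc ha hb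
  · exact h1 hab
  · rcases lt_trichotomy a c with hac | hac | hac
    · exact key_no_three β Z hβ hab hac hb ha hc
    · exact h2 hac
    · rcases lt_trichotomy b c with hbc | hbc | hbc
      · exact key_no_three β Z hβ hbc hac hb hc ha
      · exact h3 hbc
      · exact key_no_three β Z hβ hbc hab hc hb ha

/-- A fixed point of the scaled softmax has components taking at most two distinct values. -/
theorem softmax_fixed_point_two_values (n : ℕ) (β : ℝ) (hβ : 0 < β)
    (x : Fin n → ℝ) (hfix : softmax n β x = x) :
    ∃ a b : ℝ, ∀ j, x j = a ∨ x j = b := by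
  rcases Nat.eq_zero_or_pos n with hn | hn
  · subst hn; exact ⟨0, 0, fun j => j.elim0⟩
  set Z := ∑ i, Real.exp (β * x i) with hZ
  have hZpos : 0 < Z := by
    apply Finset.sum_pos (fun i _ => Real.exp_pos _)
    exact Finset.univ_nonempty_iff.mpr (Fin.pos_iff_nonempty.mp hn)
  have hroot : ∀ j, Real.exp (β * x j) = Z * x j := by
    intro j
    have := congrFun hfix j
    simp only [softmax] at this
    rw [div_eq_iff (ne_of_gt hZpos)] at this
    rw [this]; ring
  set j0 : Fin n := ⟨0, hn⟩
  by_cases hall : ∀ j, x j = x j0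
  · exact ⟨x j0, x j0, fun j => Or.inl (hall j)⟩
  · push_neg at hall
    obtain ⟨j1, hj1⟩ := hall
    refine ⟨x j0, x j1, fun j => ?_⟩
    rcases roots_eq β Z hβ (hroot j) (hroot j0) (hroot j1) with h | h | h
    · exact Or.inl h
    · exact Or.inr h
    · exact absurd h.symm hj1
end

section
/- For any nonempty proper subset J ⊂ [n], the line segment L_J = {l_J(x) : x ∈ [0, 1/|J|]}, where l_J(x) has value x on coordinates in J and (1−|J|x)/(n−|J|) on the remaining coordinates, is invariant under the scaled softmax: S_β(L_J) ⊆ L_J for all β > 0. -/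
open Real Finset

/-- The parametrization of the line segment L_J. -/
noncomputable def lineSeg (n : ℕ) (J : Finset (Fin n)) (c : ℝ) : Fin n → ℝ :=
  fun j => if j ∈ J then c else (1 - J.card * c) / (n - J.card)

/-- For nonempty proper J ⊂ [n], the segment L_J is invariant under the scaled softmax. -/
theorem softmax_lineSeg_invariant (n : ℕ) (β : ℝ) (hβ : 0 < β)
    (J : Finset (Fin n)) (hJ : J.Nonempty) (hJne : J ≠ Finset.univ)
    (c : ℝ) (hc : c ∈ Set.Icc (0 : ℝ) (1 / J.card)) :
    ∃ c' ∈ Set.Icc (0 : ℝ) (1 / J.card),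
      softmax n β (lineSeg n J c) = lineSeg n J c' := by
  obtain ⟨hc0, hc1⟩ := hc
  have hkpos : 0 < J.card := Finset.card_pos.mpr hJ
  have hk : 0 < (J.card : ℝ) := by exact_mod_cast hkpos
  have hkn : J.card < n := by
    have := Finset.card_lt_card (lt_of_le_of_ne (Finset.subset_univ J)
      hJne)
    simpa using this
  have hm : 0 < (n : ℝ) - (J.card : ℝ) := by
    have : (J.card : ℝ) < n := by exact_mod_cast hkn
    linarith
  set k : ℝ := (J.card : ℝ) with hkdef
  set d : ℝ := (1 - k * c) / ((n : ℝ) - k) with hd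
  set E : ℝ := Real.exp (β * c) with hE
  set D : ℝ := Real.exp (β * d) with hD
  have hEpos : 0 < E := Real.exp_pos _
  have hDpos : 0 < D := Real.exp_pos _
  have hcardc : (Jᶜ.card : ℝ) = (n : ℝ) - k := by
    have : Jᶜ.card = n - J.card := by
      rw [Finset.card_compl, Fintype.card_fin]
    rw [this]
    push_cast [Nat.cast_sub hkn.le]
    ring_nf
    rw [hkdef]
  have hsum : ∑ i, Real.exp (β * lineSeg n J c i) = k * E + ((n : ℝ) - k) * D := by
    rw [← Finset.sum_add_sum_compl J]
    have e1 : ∀ i ∈ J, Real.exp (β * lineSeg n J c i) = E := by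
      intro i hi; simp [lineSeg, hi, hE]
    have e2 : ∀ i ∈ Jᶜ, Real.exp (β * lineSeg n J c i) = D := by
      intro i hi
      simp only [Finset.mem_compl] at hi
      simp [lineSeg, hi, hD, hd, hkdef]
    have h1 : ∑ i ∈ J, Real.exp (β * lineSeg n J c i) = k * E := by
      rw [Finset.sum_congr rfl e1, Finset.sum_const, nsmul_eq_mul]
    have h2 : ∑ i ∈ Jᶜ, Real.exp (β * lineSeg n J c i) = ((n : ℝ) - k) * D := by
      rw [Finset.sum_congr rfl e2, Finset.sum_const, nsmul_eq_mul, hcardc]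
    rw [h1, h2]
  have hS : 0 < k * E + ((n : ℝ) - k) * D := by positivity
  set S : ℝ := k * E + ((n : ℝ) - k) * D with hSdef
  refine ⟨E / S, ⟨by positivity, ?_⟩, ?_⟩
  · rw [div_le_div_iff₀ hS hk]
    nlinarith [mul_pos hm hDpos]
  · funext j
    simp only [softmax, hsum]
    by_cases hj : j ∈ J
    · simp [lineSeg, hj, hE]
    · simp only [lineSeg, hj, if_neg, if_false]
      rw [← hD]
      rw [eq_div_iff (ne_of_gt hm)]
      field_simp
      ring
end

section
/- Every fixed point of the scaled softmax S_β lies on one of the line segments L_J for some J ⊆ [n], i.e., Fix(S_β) ⊆ ⋃_{J⊆[n]} L_J. -/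
open Real Finset

/-- Strict convexity: three ordered roots of exp(βt) = Z t are impossible. -/
lemma softmax_mid_root (β Z u v w : ℝ) (h1 : u < v) (h2 : v < w)
    (hu : Real.exp (β * u) = Z * u) (hv : Real.exp (β * v) = Z * v)
    (hw : Real.exp (β * w) = Z * w) : False := by
  set a : ℝ := (w - v) / (w - u) with ha
  set b : ℝ := (v - u) / (w - u) with hb
  have hwu : (0:ℝ) < w - u := by linarith
  have hapos : 0 < a := div_pos (by linarith) hwu
  have hbpos : 0 < b := div_pos (by linarith) hwu
  have hab : a + b = 1 := by rw [ha, hb]; field_simp; ring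
  have hcomb2 : a * u + b * w = v := by rw [ha, hb]; field_simp; ring
  have hcomb : a * (β * u) + b * (β * w) = β * v := by
    rw [← hcomb2]; ring
  have hne : β * u ≠ β * w := by
    intro h
    have hZuw : Z * u = Z * w := by rw [← hu, ← hw, h]
    rcases eq_or_ne Z 0 with hZ0 | hZ0
    · have := Real.exp_pos (β * u)
      rw [hu, hZ0, zero_mul] at this
      exact lt_irrefl 0 this
    · have : u = w := mul_left_cancel₀ hZ0 hZuw
      linarith
  have key := strictConvexOn_exp.2 (Set.mem_univ (β * u)) (Set.mem_univ (β * w)) hne hapos hbpos hab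
  simp only [smul_eq_mul] at key
  rw [hcomb, hv, hu, hw] at key
  have : a * (Z * u) + b * (Z * w) = Z * v := by rw [← hcomb2]; ring
  linarith

lemma softmax_three_roots (β Z u v w : ℝ)
    (hu : Real.exp (β * u) = Z * u) (hv : Real.exp (β * v) = Z * v)
    (hw : Real.exp (β * w) = Z * w)
    (huv : u ≠ v) (huw : u ≠ w) (hvw : v ≠ w) : False := by
  rcases lt_trichotomy u v with h1 | h1 | h1
  · rcases lt_trichotomy v w with h2 | h2 | h2
    · exact softmax_mid_root β Z u v w h1 h2 hu hv hw
    · exact hvw h2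
    · rcases lt_trichotomy u w with h3 | h3 | h3
      · exact softmax_mid_root β Z u w v h3 h2 hu hw hv
      · exact huw h3
      · exact softmax_mid_root β Z w u v h3 h1 hw hu hv
  · exact huv h1
  · rcases lt_trichotomy u w with h2 | h2 | h2
    · exact softmax_mid_root β Z v u w h1 h2 hv hu hw
    · exact huw h2
    · rcases lt_trichotomy v w with h3 | h3 | h3
      · exact softmax_mid_root β Z v w u h3 h2 hv hw hu
      · exact hvw h3
      · exact softmax_mid_root β Z w v u h3 h1 hw hv hu

/-- Every fixed point of the scaled softmax lies on one of the line segments L_J: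
its coordinates take a common value c on some J and the value (1-|J|c)/(n-|J|) off J. -/
theorem softmax_fixed_points_on_lines (n : ℕ) (hn : 0 < n) (β : ℝ) (hβ : 0 < β)
    (x : Fin n → ℝ) (hfix : softmax n β x = x) :
    ∃ (J : Finset (Fin n)) (c : ℝ), (∀ j ∈ J, x j = c) ∧
      (∀ j ∉ J, x j = (1 - J.card * c) / (n - J.card)) := by
  classical
  unfold softmax at hfix
  set Z := ∑ i, Real.exp (β * x i) with hZdef
  have hZ : 0 < Z := Finset.sum_pos (fun i _ => Real.exp_pos _) ⟨⟨0, hn⟩, Finset.mem_univ _⟩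
  have hroot : ∀ j, Real.exp (β * x j) = Z * x j := by
    intro j
    have h := congrFun hfix j
    rw [eq_comm, eq_div_iff hZ.ne'] at h
    rw [← h, mul_comm]
  have hsum1 : ∑ j, x j = 1 := by
    have h : ∀ j : Fin n, x j = Real.exp (β * x j) / Z := fun j => (congrFun hfix j).symm
    calc ∑ j, x j = ∑ j, Real.exp (β * x j) / Z := Finset.sum_congr rfl (fun j _ => h j)
    _ = Z / Z := by rw [← Finset.sum_div]
    _ = 1 := div_self hZ.ne'
  set j0 : Fin n := ⟨0, hn⟩ with hj0
  set c := x j0 with hc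
  set J : Finset (Fin n) := Finset.univ.filter (fun j => x j = c) with hJ
  refine ⟨J, c, fun j hj => (Finset.mem_filter.mp hj).2, ?_⟩
  intro j hj
  have hjc : x j ≠ c := fun h => hj (Finset.mem_filter.mpr ⟨Finset.mem_univ _, h⟩)
  have hall : ∀ i ∉ J, x i = x j := by
    intro i hi
    have hic : x i ≠ c := fun h => hi (Finset.mem_filter.mpr ⟨Finset.mem_univ _, h⟩)
    by_contra hne
    exact softmax_three_roots β Z (x i) (x j) c (hroot i) (hroot j) (hroot j0) hne hic hjc
  have hlt : J.card < n := by
    have h := Finset.card_lt_card (⟨Finset.subset_univ J, fun hsub => hj (hsub (Finset.mem_univ j))⟩ : J ⊂ Finset.univ)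
    simpa using h
  have h1 : ∑ i ∈ J, x i = J.card * c := by
    rw [Finset.sum_congr rfl (fun i hi => (Finset.mem_filter.mp hi).2), Finset.sum_const,
      nsmul_eq_mul]
  have h2 : ∑ i ∈ Jᶜ, x i = ((n : ℝ) - J.card) * x j := by
    rw [Finset.sum_congr rfl (fun i hi => hall i (Finset.mem_compl.mp hi)), Finset.sum_const,
      nsmul_eq_mul, Finset.card_compl, Fintype.card_fin, Nat.cast_sub hlt.le]
  have hsplit : (J.card : ℝ) * c + ((n : ℝ) - J.card) * x j = 1 := by
    rw [← h1, ← h2, Finset.sum_add_sum_compl]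
    exact hsum1
  have hden : (n : ℝ) - J.card ≠ 0 := by
    have : (J.card : ℝ) < n := by exact_mod_cast hlt
    linarith
  rw [eq_div_iff hden]
  linarith
end

section
/- For any affine function a(x) = αx + γ, the equation log(1/x − k) = a(x) has at most three solutions in (0, 1/k). -/
open Real

/-- For any affine function a(x) = αx + γ, the equation log(1/x − k) = αx + γ
has at most three solutions in (0, 1/k). -/
theorem log_eq_affine_at_most_three_solutions (k : ℝ) (hk : 1 ≤ k) (α γ : ℝ) :
    {x ∈ Set.Ioo (0 : ℝ) (1 / k) | Real.log (1 / x - k) = α * x + γ}.Finite ∧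
    {x ∈ Set.Ioo (0 : ℝ) (1 / k) | Real.log (1 / x - k) = α * x + γ}.ncard ≤ 3 := by
  have hk0 : (0:ℝ) < k := lt_of_lt_of_le one_pos hk
  set S := {x ∈ Set.Ioo (0 : ℝ) (1 / k) | Real.log (1 / x - k) = α * x + γ} with hSdef
  set f : ℝ → ℝ := fun y => Real.log (1 / y - k) - (α * y + γ) with hfdef
  set f' : ℝ → ℝ := fun y => -(y * (1 - k * y))⁻¹ - α with hf'def
  set f'' : ℝ → ℝ := fun y => (1 - 2 * k * y) * ((y * (1 - k * y)) ^ 2)⁻¹ with hf''def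
  have hfacts : ∀ x ∈ Set.Ioo (0:ℝ) (1/k), 0 < x ∧ 0 < 1 - k * x ∧ 0 < 1 / x - k := by
    intro x hx
    obtain ⟨hx0, hx1⟩ := hx
    have hkx : k * x < 1 := by
      have := (lt_div_iff₀ hk0).mp hx1
      nlinarith
    have he : 1 / x - k = (1 - k * x) / x := by field_simp
    exact ⟨hx0, by linarith, he ▸ div_pos (by linarith) hx0⟩
  have hderiv1 : ∀ x ∈ Set.Ioo (0:ℝ) (1/k), HasDerivAt f (f' x) x := by
    intro x hx
    obtain ⟨hx0, hkx, hpos⟩ := hfacts x hx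
    have h1 : HasDerivAt (fun y : ℝ => 1 / y - k) (-(x ^ 2)⁻¹) x := by
      simpa [one_div] using (hasDerivAt_inv hx0.ne').sub_const k
    have h2 : HasDerivAt (fun y : ℝ => Real.log (1 / y - k)) (-(x ^ 2)⁻¹ / (1 / x - k)) x :=
      h1.log hpos.ne'
    have h3 : HasDerivAt (fun y : ℝ => α * y + γ) α x := by
      simpa using ((hasDerivAt_id x).const_mul α).add_const γ
    have h4 := h2.sub h3
    have he : -(x ^ 2)⁻¹ / (1 / x - k) - α = f' x := by
      rw [hf'def]
      have h1 : x ≠ 0 := hx0.ne'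
      have h2 : (1:ℝ) - k * x ≠ 0 := hkx.ne'
      have h3 : x ^ 2 - x ^ 3 * k ≠ 0 := by nlinarith [mul_pos (mul_pos hx0 hx0) hkx]
      have hD : (x ^ 2 - x ^ 3 * k) * (x ^ 2 - x ^ 3 * k)⁻¹ = 1 := mul_inv_cancel₀ h3
      field_simp
    rwa [he] at h4
  have hderiv2 : ∀ x ∈ Set.Ioo (0:ℝ) (1/k), HasDerivAt f' (f'' x) x := by
    intro x hx
    obtain ⟨hx0, hkx, hpos⟩ := hfacts x hx
    have hu : HasDerivAt (fun y : ℝ => y * (1 - k * y)) (1 * (1 - k * x) + x * -(k * 1)) x :=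
      (hasDerivAt_id x).mul (((hasDerivAt_id x).const_mul k).const_sub 1)
    have hne : x * (1 - k * x) ≠ 0 := by positivity
    have h5 := ((hu.inv hne).neg).sub_const α
    have he : -(-(1 * (1 - k * x) + x * -(k * 1)) / (x * (1 - k * x)) ^ 2) = f'' x := by
      rw [hf''def]
      field_simp
      ring
    rwa [he] at h5
  have hcont : ∀ a b : ℝ, Set.Icc a b ⊆ Set.Ioo (0:ℝ) (1/k) → ContinuousOn f (Set.Icc a b) :=
    fun a b hsub x hx => ((hderiv1 x (hsub hx)).continuousAt).continuousWithinAt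
  have hcont' : ∀ a b : ℝ, Set.Icc a b ⊆ Set.Ioo (0:ℝ) (1/k) → ContinuousOn f' (Set.Icc a b) :=
    fun a b hsub x hx => ((hderiv2 x (hsub hx)).continuousAt).continuousWithinAt
  -- Rolle step for f between two zeros
  have rolle1 : ∀ a b : ℝ, a ∈ S → b ∈ S → a < b →
      ∃ y ∈ Set.Ioo a b, f' y = 0 := by
    intro a b ha hb hab
    have hsub : Set.Icc a b ⊆ Set.Ioo (0:ℝ) (1/k) := Set.Icc_subset_Ioo ha.1.1 hb.1.2
    have hfa : f a = 0 := sub_eq_zero.mpr ha.2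
    have hfb : f b = 0 := sub_eq_zero.mpr hb.2
    exact exists_hasDerivAt_eq_zero hab (hcont a b hsub) (hfa.trans hfb.symm)
      (fun x hx => hderiv1 x (hsub (Set.Ioo_subset_Icc_self hx)))
  have rolle2 : ∀ a b : ℝ, a ∈ Set.Ioo (0:ℝ) (1/k) → b ∈ Set.Ioo (0:ℝ) (1/k) → a < b →
      f' a = 0 → f' b = 0 → ∃ y ∈ Set.Ioo a b, f'' y = 0 := by
    intro a b ha hb hab h0a h0b
    have hsub : Set.Icc a b ⊆ Set.Ioo (0:ℝ) (1/k) := Set.Icc_subset_Ioo ha.1 hb.2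
    exact exists_hasDerivAt_eq_zero hab (hcont' a b hsub) (h0a.trans h0b.symm)
      (fun x hx => hderiv2 x (hsub (Set.Ioo_subset_Icc_self hx)))
  have hzero2 : ∀ z ∈ Set.Ioo (0:ℝ) (1/k), f'' z = 0 → z = 1/(2*k) := by
    intro z hz h0
    obtain ⟨hz0, hkz, _⟩ := hfacts z hz
    have hne : ((z * (1 - k * z)) ^ 2)⁻¹ ≠ 0 := by positivity
    have : 1 - 2 * k * z = 0 := by
      rcases mul_eq_zero.mp h0 with h | h
      · exact h
      · exact absurd h hne
    field_simp
    linarith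
  have key : ∀ a ∈ S, ∀ b ∈ S, ∀ c ∈ S, ∀ d ∈ S, a < b → b < c → c < d → False := by
    intro a ha b hb c hc d hd hab hbc hcd
    obtain ⟨y1, hy1, hy1'⟩ := rolle1 a b ha hb hab
    obtain ⟨y2, hy2, hy2'⟩ := rolle1 b c hb hc hbc
    obtain ⟨y3, hy3, hy3'⟩ := rolle1 c d hc hd hcd
    have hy1m : y1 ∈ Set.Ioo (0:ℝ) (1/k) := ⟨lt_trans ha.1.1 hy1.1, lt_trans hy1.2 hb.1.2⟩
    have hy2m : y2 ∈ Set.Ioo (0:ℝ) (1/k) := ⟨lt_trans hb.1.1 hy2.1, lt_trans hy2.2 hc.1.2⟩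
    have hy3m : y3 ∈ Set.Ioo (0:ℝ) (1/k) := ⟨lt_trans hc.1.1 hy3.1, lt_trans hy3.2 hd.1.2⟩
    have h12 : y1 < y2 := lt_trans hy1.2 hy2.1
    have h23 : y2 < y3 := lt_trans hy2.2 hy3.1
    obtain ⟨z1, hz1, hz1'⟩ := rolle2 y1 y2 hy1m hy2m h12 hy1' hy2'
    obtain ⟨z2, hz2, hz2'⟩ := rolle2 y2 y3 hy2m hy3m h23 hy2' hy3'
    have hz1m : z1 ∈ Set.Ioo (0:ℝ) (1/k) := ⟨lt_trans hy1m.1 hz1.1, lt_trans hz1.2 hy2m.2⟩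
    have hz2m : z2 ∈ Set.Ioo (0:ℝ) (1/k) := ⟨lt_trans hy2m.1 hz2.1, lt_trans hz2.2 hy3m.2⟩
    have e1 := hzero2 z1 hz1m hz1'
    have e2 := hzero2 z2 hz2m hz2'
    have : z1 < z2 := lt_trans hz1.2 hz2.1
    rw [e1, e2] at this
    exact lt_irrefl _ this
  -- no subset of size 4
  have no4 : ∀ t : Set ℝ, t ⊆ S → t.ncard ≠ 4 := by
    intro t hts hcard
    have htfin : t.Finite := by
      by_contra hinf
      rw [Set.Infinite.ncard hinf] at hcard
      omega
    lift t to Finset ℝ using htfin with t'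
    rw [Set.ncard_coe_finset] at hcard
    set l := t'.sort (· ≤ ·) with hl
    have hlen : l.length = 4 := by rw [hl, Finset.length_sort, hcard]
    have hsort : l.Pairwise (· < ·) := t'.sortedLT_sort.pairwise
    have hmem : ∀ x ∈ l, x ∈ S := fun x hx => hts ((Finset.mem_sort _).mp hx)
    match l, hlen, hsort, hmem with
    | [a, b, c, d], _, hsort, hmem =>
      have ha := hmem a (by simp)
      have hb := hmem b (by simp)
      have hc := hmem c (by simp)
      have hd := hmem d (by simp)
      have hab : a < b := by
        have := hsort; simp [List.pairwise_cons] at this; tauto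
      have hbc : b < c := by
        have := hsort; simp [List.pairwise_cons] at this; tauto
      have hcd : c < d := by
        have := hsort; simp [List.pairwise_cons] at this; tauto
      exact key a ha b hb c hc d hd hab hbc hcd
  have hfin : S.Finite := by
    by_contra hinf
    obtain ⟨t, hts, hcard⟩ := Set.Infinite.exists_subset_ncard_eq hinf 4
    exact no4 t hts hcard.2
  refine ⟨hfin, ?_⟩
  by_contra hlt
  push_neg at hlt
  obtain ⟨t, hts, hcard⟩ := Set.exists_subset_card_eq (show 4 ≤ S.ncard by omega)
  exact no4 t hts hcard
end

section
/- The function h_{n,k}(x) = log((1/x − k)/(n−k)) · (n−k)/(1 − nx), defined on (0,1/k) \ {1/n} and extended analytically at x = 1/n, is positive on (0, 1/k), tends to +∞ as x → 0⁺, and tends to +∞ as x → (1/k)⁻. -/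
open Real Filter Topology

/-- The function h_{n,k}. -/
noncomputable def hFun (n k : ℕ) (x : ℝ) : ℝ :=
  Real.log ((1 / x - k) / (n - k)) * ((n - k) / (1 - n * x))

/-- h_{n,k} is positive on (0,1/k) (away from the removable point 1/n, at which it
has a finite positive limit), tends to +∞ as x → 0⁺ and as x → (1/k)⁻. -/
theorem hFun_positive_and_tendsto (n k : ℕ) (hk : 1 ≤ k) (hkn : 2 * k ≤ n) (hn : 3 < n) :
    (∀ x ∈ Set.Ioo (0 : ℝ) (1 / k), x ≠ 1 / n → 0 < hFun n k x) ∧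
    (∃ L : ℝ, 0 < L ∧ Tendsto (hFun n k) (𝓝[≠] (1 / n)) (𝓝 L)) ∧
    Tendsto (hFun n k) (𝓝[>] (0 : ℝ)) atTop ∧
    Tendsto (hFun n k) (𝓝[<] ((1 : ℝ) / k)) atTop := by
  have hk' : (1:ℝ) ≤ (k:ℝ) := by exact_mod_cast hk
  have hn' : (3:ℝ) < (n:ℝ) := by exact_mod_cast hn
  have hkn' : (2:ℝ) * k ≤ (n:ℝ) := by exact_mod_cast hkn
  have hk0 : (0:ℝ) < k := by linarith
  have hn0 : (0:ℝ) < n := by linarith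
  have hnk : (0:ℝ) < (n:ℝ) - k := by linarith
  refine ⟨?_, ?_, ?_, ?_⟩
  · rintro x ⟨hx0, hxk⟩ hxn
    have hxk' : (k:ℝ) < 1 / x := by
      rw [lt_div_iff₀ hx0]
      nlinarith [(lt_div_iff₀ hk0).mp hxk]
    rcases lt_or_gt_of_ne hxn with h | h
    · -- x < 1/n
      have hnx : (n:ℝ) * x < 1 := by nlinarith [(lt_div_iff₀ hn0).mp h]
      have h1 : (n:ℝ) < 1 / x := by rw [lt_div_iff₀ hx0]; nlinarith
      have hlog : 0 < Real.log ((1/x - k)/((n:ℝ)-k)) :=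
        Real.log_pos ((one_lt_div hnk).mpr (by linarith))
      exact mul_pos hlog (div_pos hnk (by linarith))
    · -- 1/n < x
      have hnx : (1:ℝ) < (n:ℝ) * x := by nlinarith [(div_lt_iff₀ hn0).mp h]
      have h1 : 1 / x < (n:ℝ) := by rw [div_lt_iff₀ hx0]; nlinarith
      have hlog : Real.log ((1/x - k)/((n:ℝ)-k)) < 0 :=
        Real.log_neg (div_pos (by linarith) hnk) ((div_lt_one hnk).mpr (by linarith))
      exact mul_pos_of_neg_of_neg hlog (div_neg_of_pos_of_neg hnk (by linarith))
  · -- limit n at 1/n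
    refine ⟨n, hn0, ?_⟩
    set u : ℝ → ℝ := fun x => (1/x - k)/((n:ℝ) - k) with hu
    have hinvn : (0:ℝ) < 1/(n:ℝ) := by positivity
    have hmem : ∀ᶠ x in 𝓝[≠] (1/(n:ℝ)), 0 < x ∧ x ≠ 1/(n:ℝ) := by
      filter_upwards [eventually_nhdsWithin_of_eventually_nhds
        (isOpen_Ioi.eventually_mem hinvn), self_mem_nhdsWithin] with x h1 h2
      exact ⟨h1, h2⟩
    have hune : ∀ x : ℝ, 0 < x → x ≠ 1/(n:ℝ) → u x ≠ 1 := by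
      intro x hx0 hxn he
      have h1 : 1/x - (k:ℝ) = (n:ℝ) - k := (div_eq_one_iff_eq (ne_of_gt hnk)).mp he
      have h2 : 1/x = (n:ℝ) := by linarith
      have h3 : (1:ℝ) = n * x := by
        field_simp at h2; linarith [h2]
      exact hxn (by rw [eq_div_iff (ne_of_gt hn0)]; linarith)
    have hu1 : Tendsto u (𝓝[≠] (1/(n:ℝ))) (𝓝[≠] (1:ℝ)) := by
      rw [tendsto_nhdsWithin_iff]
      constructor
      · have hc : ContinuousAt u (1/(n:ℝ)) := by
          apply ContinuousAt.div _ continuousAt_const (ne_of_gt hnk)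
          exact (continuousAt_const.div continuousAt_id (ne_of_gt hinvn)).sub continuousAt_const
        have hval : u (1/(n:ℝ)) = 1 := by
          simp only [hu, one_div_one_div]
          field_simp
        have h := hc.tendsto.mono_left (nhdsWithin_le_nhds (s := {(1/(n:ℝ))}ᶜ))
        rwa [hval] at h
      · filter_upwards [hmem] with x ⟨hx0, hxn⟩
        exact hune x hx0 hxn
    have hslope : Tendsto (fun y : ℝ => Real.log y / (y - 1)) (𝓝[≠] (1:ℝ)) (𝓝 1) := by
      have h := hasDerivAt_iff_tendsto_slope.mp (Real.hasDerivAt_log one_ne_zero)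
      rw [inv_one] at h
      refine h.congr fun y => ?_
      rw [slope_def_field, Real.log_one, sub_zero]
    have hinv : Tendsto (fun x : ℝ => 1/x) (𝓝[≠] (1/(n:ℝ))) (𝓝 (n:ℝ)) := by
      have hc : ContinuousAt (fun x : ℝ => 1/x) (1/(n:ℝ)) :=
        continuousAt_const.div continuousAt_id (ne_of_gt hinvn)
      have h := hc.tendsto.mono_left (nhdsWithin_le_nhds (s := {(1/(n:ℝ))}ᶜ))
      rwa [one_div_one_div] at h
    have hprod : Tendsto (fun x : ℝ => Real.log (u x) / (u x - 1) * (1/x))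
        (𝓝[≠] (1/(n:ℝ))) (𝓝 ((1:ℝ) * n)) :=
      ((hslope.comp hu1).mul hinv)
    rw [one_mul] at hprod
    refine hprod.congr' ?_
    filter_upwards [hmem] with x ⟨hx0, hxn⟩
    have hxne : x ≠ 0 := ne_of_gt hx0
    have hne1 : 1 - (n:ℝ)*x ≠ 0 := by
      intro h
      exact hxn (by rw [eq_div_iff (ne_of_gt hn0)]; linarith [mul_comm x (n:ℝ)])
    have hun : u x - 1 ≠ 0 := sub_ne_zero.mpr (hune x hx0 hxn)
    have hfact : 1/(u x - 1) * (1/x) = ((n:ℝ)-k)/(1 - n*x) := by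
      have h1 : u x - 1 = (1/x - n)/((n:ℝ)-k) := by
        simp only [hu]
        rw [div_sub_one (ne_of_gt hnk)]
        congr 1
        ring
      rw [h1, one_div_div]
      rw [div_mul_div_comm, mul_one]
      congr 1
      rw [sub_mul, one_div_mul_cancel hxne]
    show Real.log (u x) / (u x - 1) * (1/x) = hFun n k x
    unfold hFun
    rw [← hfact]
    simp only [hu]
    ring
  · -- x → 0⁺
    have h1 : Tendsto (fun x : ℝ => Real.log ((1/x - k)/((n:ℝ)-k))) (𝓝[>] (0:ℝ)) atTop := by
      apply Real.tendsto_log_atTop.comp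
      apply Tendsto.atTop_div_const hnk
      apply tendsto_atTop_add_const_right
      exact tendsto_inv_nhdsGT_zero.congr fun x => (one_div x).symm
    have h2 : Tendsto (fun x : ℝ => ((n:ℝ)-k)/(1 - n*x)) (𝓝[>] (0:ℝ)) (𝓝 ((n:ℝ)-k)) := by
      have hc : ContinuousAt (fun x : ℝ => ((n:ℝ)-k)/(1 - n*x)) 0 := by
        apply ContinuousAt.div continuousAt_const (by fun_prop)
        norm_num
      have h := hc.tendsto.mono_left (nhdsWithin_le_nhds (s := Set.Ioi (0:ℝ)))
      simpa using h
    exact Tendsto.atTop_mul_pos hnk h1 h2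
  · -- x → (1/k)⁻
    have hinvk : (0:ℝ) < 1/(k:ℝ) := by positivity
    have hmem : ∀ᶠ x in 𝓝[<] (1/(k:ℝ)), 0 < x ∧ x < 1/(k:ℝ) := by
      filter_upwards [eventually_nhdsWithin_of_eventually_nhds
        (isOpen_Ioi.eventually_mem hinvk), self_mem_nhdsWithin] with x h1 h2
      exact ⟨h1, h2⟩
    have harg : Tendsto (fun x : ℝ => (1/x - k)/((n:ℝ)-k)) (𝓝[<] (1/(k:ℝ))) (𝓝[≠] (0:ℝ)) := by
      rw [tendsto_nhdsWithin_iff]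
      constructor
      · have hc : ContinuousAt (fun x : ℝ => (1/x - k)/((n:ℝ)-k)) (1/(k:ℝ)) := by
          apply ContinuousAt.div _ continuousAt_const (ne_of_gt hnk)
          exact (continuousAt_const.div continuousAt_id (ne_of_gt hinvk)).sub continuousAt_const
        have h := hc.tendsto.mono_left (nhdsWithin_le_nhds (s := Set.Iio (1/(k:ℝ))))
        simpa [one_div_one_div] using h
      · filter_upwards [hmem] with x ⟨hx0, hxk⟩
        have hxk' : (k:ℝ) < 1/x := by
          rw [lt_div_iff₀ hx0]
          nlinarith [(lt_div_iff₀ hk0).mp hxk]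
        have : 0 < (1/x - k)/((n:ℝ)-k) := div_pos (by linarith) hnk
        exact ne_of_gt this
    have h1 : Tendsto (fun x : ℝ => Real.log ((1/x - k)/((n:ℝ)-k))) (𝓝[<] (1/(k:ℝ))) atBot :=
      Real.tendsto_log_nhdsNE_zero.comp harg
    have hCneg : ((n:ℝ)-k)/(1 - n*(1/k)) < 0 := by
      apply div_neg_of_pos_of_neg hnk
      have h2k : (2:ℝ) ≤ (n:ℝ)/k := (le_div_iff₀ hk0).mpr (by linarith)
      rw [mul_one_div]
      linarith
    have h2 : Tendsto (fun x : ℝ => ((n:ℝ)-k)/(1 - n*x)) (𝓝[<] (1/(k:ℝ)))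
        (𝓝 (((n:ℝ)-k)/(1 - n*(1/k)))) := by
      have hne : 1 - (n:ℝ)*(1/k) ≠ 0 := by
        have h2k : (2:ℝ) ≤ (n:ℝ)/k := (le_div_iff₀ hk0).mpr (by linarith)
        rw [mul_one_div]; intro h; linarith
      have hc : ContinuousAt (fun x : ℝ => ((n:ℝ)-k)/(1 - n*x)) (1/(k:ℝ)) :=
        ContinuousAt.div continuousAt_const (by fun_prop) hne
      exact hc.tendsto.mono_left (nhdsWithin_le_nhds (s := Set.Iio (1/(k:ℝ))))
    exact Tendsto.atBot_mul_neg hCneg h1 h2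
end

section
/- Let w_1,…,w_n ∈ ℝ^d be unit vectors, J ⊆ [n], and define τ₁(v) = max_{j∈J} w_jᵀv, τ₂(v) = max_{j∉J} w_jᵀv, δ = τ₁(v) − τ₂(v) for v ∈ cv{w_j : j∈J}. Then for x = v + εr with ‖r‖ = 1 and ε > 0, the continuous Hopfield map f(x) = W·S_β(Wᵀx) satisfies Dist(f(x), cv{w_j : j∈J}) < 2(n − |J|)·exp(β(−δ + 2ε)). -/
set_option maxHeartbeats 1000000


open Real Finset
open scoped RealInnerProductSpace

/-- The continuous Hopfield map f(x) = W S_β(Wᵀ x). -/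
noncomputable def hopfield (d n : ℕ) (β : ℝ) (w : Fin n → EuclideanSpace ℝ (Fin d))
    (x : EuclideanSpace ℝ (Fin d)) : EuclideanSpace ℝ (Fin d) :=
  ∑ j, softmax n β (fun i => ⟪w i, x⟫) j • w j

/-- Lemma 3 of the paper: for x = v + εr with v in the convex hull of the J-patterns,
the image f(x) is exponentially close to that convex hull. -/
theorem hopfield_dist_convexHull (d n : ℕ) (β : ℝ) (hβ : 0 < β)
    (w : Fin n → EuclideanSpace ℝ (Fin d)) (hw : ∀ j, ‖w j‖ = 1)
    (J : Finset (Fin n)) (hJ : J.Nonempty) (hJne : J ≠ Finset.univ)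
    (v : EuclideanSpace ℝ (Fin d)) (hv : v ∈ convexHull ℝ (w '' J))
    (r : EuclideanSpace ℝ (Fin d)) (hr : ‖r‖ = 1) (ε : ℝ) (hε : 0 < ε) :
    Metric.infDist (hopfield d n β w (v + ε • r)) (convexHull ℝ (w '' J)) <
      2 * (n - J.card) *
        Real.exp (β * (-((J.sup' hJ fun j => ⟪w j, v⟫) -
          (Jᶜ.sup' (by simpa [Finset.nonempty_iff_ne_empty, Finset.compl_eq_univ_sdiff]
              using fun h => hJne (by simpa [Finset.sdiff_eq_empty_iff_subset] using h))
            fun j => ⟪w j, v⟫)) + 2 * ε)) := by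
  have hJc : (Jᶜ : Finset (Fin n)).Nonempty := by
    rw [Finset.nonempty_iff_ne_empty]
    intro h
    exact hJne (by simpa [Finset.compl_eq_empty_iff] using h)
  set x : EuclideanSpace ℝ (Fin d) := v + ε • r with hx
  set s : Fin n → ℝ := softmax n β (fun i => ⟪w i, x⟫) with hs
  set D : ℝ := ∑ i, Real.exp (β * ⟪w i, x⟫) with hD
  haveI : Nonempty (Fin n) := ⟨hJ.choose⟩
  have hDpos : 0 < D := by
    apply Finset.sum_pos (fun i _ => Real.exp_pos _)
    exact Finset.univ_nonempty
  have hsdef : ∀ j, s j = Real.exp (β * ⟪w j, x⟫) / D := fun j => rfl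
  have hspos : ∀ j, 0 < s j := fun j => div_pos (Real.exp_pos _) hDpos
  have hssum : ∑ j, s j = 1 := by
    simp only [hsdef]
    rw [← Finset.sum_div, ← hD, div_self hDpos.ne']
  set σ : ℝ := ∑ j ∈ J, s j with hσdef
  set S : ℝ := ∑ j ∈ Jᶜ, s j with hSdef
  have hσpos : 0 < σ := Finset.sum_pos (fun i _ => hspos i) hJ
  have hSpos : 0 < S := Finset.sum_pos (fun i _ => hspos i) hJc
  have hsum : σ + S = 1 := by
    rw [hσdef, hSdef, Finset.sum_add_sum_compl]; exact hssum
  -- the candidate point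
  set y : EuclideanSpace ℝ (Fin d) := σ⁻¹ • ∑ j ∈ J, s j • w j with hy
  have hymem : y ∈ convexHull ℝ (w '' J) := by
    have := Finset.centerMass_mem_convexHull (t := J) (w := s) (z := w)
      (fun i _ => (hspos i).le) hσpos
      (fun i hi => Set.mem_image_of_mem w (by exact_mod_cast hi))
    simpa [Finset.centerMass, hy] using this
  -- distance bound
  have hfsplit : hopfield d n β w x =
      (∑ j ∈ J, s j • w j) + ∑ j ∈ Jᶜ, s j • w j := by
    rw [hopfield, Finset.sum_add_sum_compl]
  have hA : ‖∑ j ∈ J, s j • w j‖ ≤ σ := by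
    calc ‖∑ j ∈ J, s j • w j‖ ≤ ∑ j ∈ J, ‖s j • w j‖ := norm_sum_le _ _
    _ = ∑ j ∈ J, s j := by
        refine Finset.sum_congr rfl fun j _ => ?_
        rw [norm_smul, hw j, mul_one, Real.norm_eq_abs, abs_of_pos (hspos j)]
  have hB : ‖∑ j ∈ Jᶜ, s j • w j‖ ≤ S := by
    calc ‖∑ j ∈ Jᶜ, s j • w j‖ ≤ ∑ j ∈ Jᶜ, ‖s j • w j‖ := norm_sum_le _ _
    _ = ∑ j ∈ Jᶜ, s j := by
        refine Finset.sum_congr rfl fun j _ => ?_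
        rw [norm_smul, hw j, mul_one, Real.norm_eq_abs, abs_of_pos (hspos j)]
  have hdist : ‖hopfield d n β w x - y‖ ≤ 2 * S := by
    have heq : hopfield d n β w x - y =
        (∑ j ∈ Jᶜ, s j • w j) + (1 - σ⁻¹) • (∑ j ∈ J, s j • w j) := by
      rw [hfsplit, hy, sub_smul, one_smul]
      abel
    rw [heq]
    calc ‖(∑ j ∈ Jᶜ, s j • w j) + (1 - σ⁻¹) • (∑ j ∈ J, s j • w j)‖
        ≤ ‖∑ j ∈ Jᶜ, s j • w j‖ + ‖(1 - σ⁻¹) • (∑ j ∈ J, s j • w j)‖ := norm_add_le _ _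
      _ ≤ S + |1 - σ⁻¹| * σ := by
          gcongr
          rw [norm_smul, Real.norm_eq_abs]
          exact mul_le_mul_of_nonneg_left hA (abs_nonneg _)
      _ = S + (σ⁻¹ - 1) * σ := by
          rw [abs_of_nonpos]
          · ring
          · have : 1 ≤ σ⁻¹ := by
              rw [le_inv_comm₀ one_pos hσpos]
              simp only [inv_one]
              linarith
            linarith
      _ = 2 * S := by
          field_simp
          linarith
  -- the exponential bound on S
  obtain ⟨k, hkJ, hk⟩ := Finset.exists_mem_eq_sup' hJ (fun j => ⟪w j, v⟫)
  set τ₁ : ℝ := J.sup' hJ fun j => ⟪w j, v⟫ with hτ₁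
  set τ₂ : ℝ := Jᶜ.sup' hJc fun j => ⟪w j, v⟫ with hτ₂
  set E : ℝ := Real.exp (β * (-(τ₁ - τ₂) + 2 * ε)) with hE
  have hinner : ∀ j, ⟪w j, x⟫ = ⟪w j, v⟫ + ε * ⟪w j, r⟫ := by
    intro j
    rw [hx, inner_add_right, real_inner_smul_right]
  have hinner_r : ∀ j, |⟪w j, r⟫| ≤ 1 := by
    intro j
    calc |⟪w j, r⟫| ≤ ‖w j‖ * ‖r‖ := abs_real_inner_le_norm _ _
    _ = 1 := by rw [hw j, hr, mul_one]
  have hsbound : ∀ j ∈ Jᶜ, s j < E := by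
    intro j hj
    have hjk : j ≠ k := fun h => (Finset.mem_compl.mp hj) (h ▸ hkJ)
    have hDk : Real.exp (β * ⟪w k, x⟫) < D := by
      rw [hD]
      exact Finset.single_lt_sum (f := fun i => Real.exp (β * ⟪w i, x⟫)) hjk (Finset.mem_univ k) (Finset.mem_univ j)
        (Real.exp_pos _) (fun i _ _ => (Real.exp_pos _).le)
    have h1 : s j < Real.exp (β * ⟪w j, x⟫) / Real.exp (β * ⟪w k, x⟫) := by
      rw [hsdef]
      exact div_lt_div_of_pos_left (Real.exp_pos _) (Real.exp_pos _) hDk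
    have h2 : Real.exp (β * ⟪w j, x⟫) / Real.exp (β * ⟪w k, x⟫) ≤ E := by
      rw [← Real.exp_sub, hE, Real.exp_le_exp]
      have hjv : ⟪w j, v⟫ ≤ τ₂ := Finset.le_sup' (fun j => (⟪w j, v⟫ : ℝ)) hj
      have hjr := abs_le.mp (hinner_r j)
      have hkr := abs_le.mp (hinner_r k)
      have := hinner j; have := hinner k
      have hkv : ⟪w k, v⟫ = τ₁ := hk.symm
      rw [hinner j, hinner k, ← mul_sub]
      apply mul_le_mul_of_nonneg_left _ hβ.le
      rw [hkv]
      nlinarith [hjr.2, hkr.1]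
    exact h1.trans_le h2
  have hScard : S < (Jᶜ.card : ℝ) * E := by
    calc S < ∑ _j ∈ Jᶜ, E := Finset.sum_lt_sum_of_nonempty hJc hsbound
    _ = (Jᶜ.card : ℝ) * E := by rw [Finset.sum_const, nsmul_eq_mul]
  have hcard : (Jᶜ.card : ℝ) = (n : ℝ) - J.card := by
    rw [Finset.card_compl, Fintype.card_fin]
    have : J.card ≤ n := by simpa using Finset.card_le_univ J
    push_cast [Nat.cast_sub this]
    ring
  have hfinal : Metric.infDist (hopfield d n β w x) (convexHull ℝ (w '' J)) ≤ 2 * S := by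
    calc Metric.infDist (hopfield d n β w x) (convexHull ℝ (w '' J))
        ≤ dist (hopfield d n β w x) y := Metric.infDist_le_dist_of_mem hymem
      _ = ‖hopfield d n β w x - y‖ := dist_eq_norm _ _
      _ ≤ 2 * S := hdist
  have : (2:ℝ) * S < 2 * ((n : ℝ) - J.card) * E := by
    rw [← hcard, mul_assoc]
    linarith
  calc Metric.infDist (hopfield d n β w x) (convexHull ℝ (w '' J)) ≤ 2 * S := hfinal
  _ < 2 * ((n : ℝ) - J.card) * E := this
  _ = _ := by rw [hE]
end

section
/- Let w_1,…,w_n be pairwise distinct unit vectors in ℝ^d with ω := max_{j≠k} |w_jᵀw_k| < 1. Let p ∈ Δ^{n-1} with p_j ≥ a and p_k ≥ a for some j ≠ k and a > 0, and set μ = Wp, u = (w_j − w_k)/‖w_j − w_k‖. Then uᵀ (β Σ_i p_i (w_i − μ)(w_i − μ)ᵀ) u ≥ (β/4) · a · (1 − ω)². -/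
open Real Finset
open scoped RealInnerProductSpace

/-- Quadratic form lower bound along the direction u = (w_j − w_k)/‖w_j − w_k‖:
uᵀ(β Σ_i p_i (w_i − μ)(w_i − μ)ᵀ)u ≥ (β/4)·a·(1−ω)². -/
theorem jacobian_quadratic_form_lower_bound (d n : ℕ) (β : ℝ) (hβ : 0 < β)
    (w : Fin n → EuclideanSpace ℝ (Fin d)) (hw : ∀ i, ‖w i‖ = 1)
    (hdist : ∀ i i', i ≠ i' → w i ≠ w i')
    (ω : ℝ) (hω : ω < 1) (hωbound : ∀ i i', i ≠ i' → |⟪w i, w i'⟫| ≤ ω)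
    (p : Fin n → ℝ) (hp0 : ∀ i, 0 ≤ p i) (hp1 : ∑ i, p i = 1)
    (a : ℝ) (ha : 0 < a) (j k : Fin n) (hjk : j ≠ k) (hpj : a ≤ p j) (hpk : a ≤ p k)
    (μ : EuclideanSpace ℝ (Fin d)) (hμ : μ = ∑ i, p i • w i)
    (u : EuclideanSpace ℝ (Fin d)) (hu : u = ‖w j - w k‖⁻¹ • (w j - w k)) :
    β / 4 * a * (1 - ω) ^ 2 ≤ β * ∑ i, p i * ⟪w i - μ, u⟫ ^ 2 := by
  set c : ℝ := ‖w j - w k‖ with hc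
  have hne : w j ≠ w k := hdist j k hjk
  have hcpos : 0 < c := by
    rw [hc, norm_pos_iff]; exact sub_ne_zero_of_ne hne
  have hω0 : 0 ≤ ω := le_trans (abs_nonneg _) (hωbound j k hjk)
  have hcsq : c ^ 2 = 2 - 2 * ⟪w j, w k⟫ := by
    rw [hc, @norm_sub_sq_real, hw j, hw k]; ring
  have hcsq_ge : 2 * (1 - ω) ≤ c ^ 2 := by
    have := (abs_le.mp (hωbound j k hjk)).2
    linarith [hcsq]
  -- x - y = c
  set x : ℝ := ⟪w j - μ, u⟫ with hx
  set y : ℝ := ⟪w k - μ, u⟫ with hy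
  have hxy : x - y = c := by
    rw [hx, hy, ← inner_sub_left]
    have : (w j - μ) - (w k - μ) = w j - w k := by abel
    rw [this, hu, real_inner_smul_right, real_inner_self_eq_norm_sq, ← hc]
    field_simp
  -- sum lower bound by the two terms
  have hterm : ∀ i ∈ Finset.univ \ ({j, k} : Finset (Fin n)),
      0 ≤ p i * ⟪w i - μ, u⟫ ^ 2 := fun i _ =>
    mul_nonneg (hp0 i) (sq_nonneg _)
  have hsub : ({j, k} : Finset (Fin n)) ⊆ Finset.univ := Finset.subset_univ _
  have hpair : ∑ i ∈ ({j, k} : Finset (Fin n)), p i * ⟪w i - μ, u⟫ ^ 2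
      ≤ ∑ i, p i * ⟪w i - μ, u⟫ ^ 2 := by
    apply Finset.sum_le_sum_of_subset_of_nonneg hsub
    intro i _ hi
    exact mul_nonneg (hp0 i) (sq_nonneg _)
  rw [Finset.sum_pair hjk] at hpair
  have h2 : a * x ^ 2 + a * y ^ 2 ≤ p j * x ^ 2 + p k * y ^ 2 := by
    have := mul_le_mul_of_nonneg_right hpj (sq_nonneg x)
    have := mul_le_mul_of_nonneg_right hpk (sq_nonneg y)
    linarith
  have h3 : a * (1 - ω) ≤ a * x ^ 2 + a * y ^ 2 := by
    have hxy2 : x ^ 2 + y ^ 2 ≥ (x - y) ^ 2 / 2 := by nlinarith [sq_nonneg (x + y)]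
    rw [hxy] at hxy2
    nlinarith
  have h4 : β / 4 * a * (1 - ω) ^ 2 ≤ β * (a * (1 - ω)) := by
    nlinarith [mul_nonneg (mul_nonneg (mul_pos hβ ha).le (sub_nonneg.mpr hω.le)) (by linarith : (0:ℝ) ≤ 3 + ω)]
  calc β / 4 * a * (1 - ω) ^ 2 ≤ β * (a * (1 - ω)) := h4
    _ ≤ β * ∑ i, p i * ⟪w i - μ, u⟫ ^ 2 := by
        apply mul_le_mul_of_nonneg_left _ hβ.le
        linarith
end

section
/- Let p ∈ Δ^{n-1} be in the interior of the simplex with p_j ≥ a > 0 for at least two indices j, and let the vectors w_1, …, w_n be unit vectors with pairwise inner products bounded in absolute value by ω < 1. If x* = Wp is a fixed point of f(x) = W S_β(Wᵀx) and β > 4/(a(1−ω)²), then the spectral radius of the Jacobian of f at x* is strictly greater than 1, so x* is an unstable fixed point. -/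
open Real Finset
open scoped RealInnerProductSpace

theorem softmax_hasFDerivAt (d n : ℕ) (β : ℝ) (w : Fin n → EuclideanSpace ℝ (Fin d))
    (p : Fin n → ℝ)
    (x : EuclideanSpace ℝ (Fin d)) (hx : x = ∑ i, p i • w i)
    (hp : p = softmax n β fun i => ⟪w i, x⟫) (jj : Fin n) :
    HasFDerivAt (fun y => softmax n β (fun i => ⟪w i, y⟫) jj)
      ((β * p jj) • innerSL ℝ (w jj - x)) x := by
  have hDpos : (0:ℝ) < ∑ i, Real.exp (β * ⟪w i, x⟫) :=
    Finset.sum_pos (fun i _ => Real.exp_pos _) ⟨jj, Finset.mem_univ _⟩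
  have hDne : (∑ i, Real.exp (β * ⟪w i, x⟫)) ≠ 0 := ne_of_gt hDpos
  have hNder : ∀ i : Fin n, HasFDerivAt
      (fun y : EuclideanSpace ℝ (Fin d) => Real.exp (β * ⟪w i, y⟫))
      ((β * Real.exp (β * ⟪w i, x⟫)) • (innerSL ℝ (w i))) x := by
    intro i
    have h0 : HasFDerivAt (fun y : EuclideanSpace ℝ (Fin d) => β * ⟪w i, y⟫)
        (β • innerSL ℝ (w i)) x := ((innerSL ℝ (w i)).hasFDerivAt).const_mul β
    have h1 := h0.exp
    rw [smul_smul, mul_comm (Real.exp _) β] at h1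
    exact h1
  have hDder : HasFDerivAt (fun y : EuclideanSpace ℝ (Fin d) => ∑ i, Real.exp (β * ⟪w i, y⟫))
      (∑ i, (β * Real.exp (β * ⟪w i, x⟫)) • (innerSL ℝ (w i))) x :=
    HasFDerivAt.fun_sum fun i _ => hNder i
  have hinv : HasFDerivAt
      (fun y : EuclideanSpace ℝ (Fin d) => (∑ i, Real.exp (β * ⟪w i, y⟫))⁻¹)
      ((-((∑ i, Real.exp (β * ⟪w i, x⟫)) ^ 2)⁻¹) •
        (∑ i, (β * Real.exp (β * ⟪w i, x⟫)) • (innerSL ℝ (w i)))) x := by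
    have h2 : HasDerivAt (fun t : ℝ => t⁻¹) (-((∑ i, Real.exp (β * ⟪w i, x⟫)) ^ 2)⁻¹)
        (∑ i, Real.exp (β * ⟪w i, x⟫)) := hasDerivAt_inv hDne
    exact h2.comp_hasFDerivAt x hDder
  have hmul := (hNder jj).mul hinv
  have hfun : (fun y => softmax n β (fun i => ⟪w i, y⟫) jj) =
      (fun y : EuclideanSpace ℝ (Fin d) =>
        Real.exp (β * ⟪w jj, y⟫) * (∑ i, Real.exp (β * ⟪w i, y⟫))⁻¹) := by
    funext y
    simp [softmax, div_eq_mul_inv]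
  rw [hfun]
  refine hmul.congr_fderiv ?_
  symm
  have hpj : ∀ i, p i = Real.exp (β * ⟪w i, x⟫) / (∑ i', Real.exp (β * ⟪w i', x⟫)) := by
    intro i; rw [hp]; rfl
  have hxin : ∀ v : EuclideanSpace ℝ (Fin d), ⟪x, v⟫ = ∑ i, p i * ⟪w i, v⟫ := by
    intro v
    rw [hx, sum_inner]
    exact Finset.sum_congr rfl fun i _ => real_inner_smul_left _ _ _
  ext v
  simp only [ContinuousLinearMap.smul_apply, ContinuousLinearMap.add_apply,
    ContinuousLinearMap.coe_sum', Finset.sum_apply, innerSL_apply_apply, smul_eq_mul,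
    inner_sub_left]
  rw [hxin v, hpj jj]
  simp only [hpj, div_mul_eq_mul_div, ← Finset.sum_div]
  rw [show (∑ i, β * Real.exp (β * ⟪w i, x⟫) * ⟪w i, v⟫)
      = β * ∑ i, Real.exp (β * ⟪w i, x⟫) * ⟪w i, v⟫ by
    rw [Finset.mul_sum]; exact Finset.sum_congr rfl fun i _ => by ring]
  field_simp
  ring

private lemma key_ineq (β a ω cj ck pj pk : ℝ) (hβpos : 0 < β) (ha : 0 < a)
    (hω0 : 0 ≤ ω) (hω : ω < 1) (hβ4 : 4 < β * (a * (1 - ω) ^ 2))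
    (hpj : a ≤ pj) (hpk : a ≤ pk) (hsq : 2 * (1 - ω) ≤ (cj - ck) ^ 2) :
    1 < β * pj * cj * cj + β * pk * ck * ck := by
  have ht : (0:ℝ) < 1 - ω := by linarith
  have h5 : 1 < β * a * (1 - ω) := by
    nlinarith [mul_pos (mul_pos hβpos ha) ht,
      mul_nonneg (mul_nonneg (mul_nonneg hβpos.le ha.le) ht.le) hω0]
  have hc2 : 1 - ω ≤ cj ^ 2 + ck ^ 2 := by nlinarith [sq_nonneg (cj + ck)]
  have e2 : β * a * (1 - ω) ≤ β * a * (cj ^ 2 + ck ^ 2) :=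
    mul_le_mul_of_nonneg_left hc2 (mul_pos hβpos ha).le
  have e3 : β * a * cj ^ 2 ≤ β * pj * cj ^ 2 := by
    nlinarith [mul_nonneg (mul_nonneg hβpos.le (sub_nonneg.mpr hpj)) (sq_nonneg cj)]
  have e4 : β * a * ck ^ 2 ≤ β * pk * ck ^ 2 := by
    nlinarith [mul_nonneg (mul_nonneg hβpos.le (sub_nonneg.mpr hpk)) (sq_nonneg ck)]
  nlinarith [h5, e2, e3, e4]

/-- If the fixed point x* = Wp keeps mass at least a on two coordinates and
β > 4/(a(1−ω)²), then the Jacobian of the Hopfield map at x* has spectral radius > 1,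
i.e., x* is an unstable fixed point. -/
theorem hopfield_unstable_fixed_point (d n : ℕ) (β : ℝ) (hβpos : 0 < β)
    (w : Fin n → EuclideanSpace ℝ (Fin d)) (hw : ∀ i, ‖w i‖ = 1)
    (ω : ℝ) (hω : ω < 1) (hωb : ∀ i i', i ≠ i' → |⟪w i, w i'⟫| ≤ ω)
    (p : Fin n → ℝ) (hp0 : ∀ i, 0 ≤ p i) (hp1 : ∑ i, p i = 1)
    (a : ℝ) (ha : 0 < a) (j k : Fin n) (hjk : j ≠ k) (hpj : a ≤ p j) (hpk : a ≤ p k)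
    (x : EuclideanSpace ℝ (Fin d)) (hx : x = ∑ i, p i • w i)
    (hp : p = softmax n β fun i => ⟪w i, x⟫)
    (hfix : hopfield d n β w x = x)
    (hβ : 4 / (a * (1 - ω) ^ 2) < β) :
    1 < spectralRadius ℝ (fderiv ℝ (hopfield d n β w) x) := by
  classical
  -- the Jacobian
  set K : EuclideanSpace ℝ (Fin d) →L[ℝ] EuclideanSpace ℝ (Fin d) :=
    ∑ i, ((β * p i) • innerSL ℝ (w i - x)).smulRight (w i) with hKdef
  have hHop : HasFDerivAt (hopfield d n β w) K x := by
    have : hopfield d n β w = fun y => ∑ i, softmax n β (fun i' => ⟪w i', y⟫) i • w i := rfl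
    rw [this]
    exact HasFDerivAt.fun_sum fun i _ =>
      (softmax_hasFDerivAt d n β w p x hx hp i).smul_const (w i)
  have hfd : fderiv ℝ (hopfield d n β w) x = K := hHop.fderiv
  rw [hfd]
  -- applying K
  have hKapp : ∀ v, K v = ∑ i, (β * p i * ⟪w i - x, v⟫) • w i := by
    intro v
    rw [hKdef, ContinuousLinearMap.sum_apply]
    refine Finset.sum_congr rfl fun i _ => ?_
    rw [ContinuousLinearMap.smulRight_apply, ContinuousLinearMap.smul_apply, innerSL_apply_apply,
      smul_eq_mul]
  -- the centered coefficients sum to zero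
  have hzero : ∀ v : EuclideanSpace ℝ (Fin d), ∑ i, p i * ⟪w i - x, v⟫ = 0 := by
    intro v
    have hxin : ⟪x, v⟫ = ∑ i, p i * ⟪w i, v⟫ := by
      rw [hx, sum_inner]
      exact Finset.sum_congr rfl fun i _ => real_inner_smul_left _ _ _
    simp only [inner_sub_left, mul_sub, Finset.sum_sub_distrib, ← Finset.sum_mul, hp1, one_mul]
    rw [hxin]
    ring
  -- symmetric bilinear form of K
  have hKinner : ∀ u v : EuclideanSpace ℝ (Fin d),
      ⟪K u, v⟫ = ∑ i, β * p i * ⟪w i - x, u⟫ * ⟪w i - x, v⟫ := by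
    intro u v
    rw [hKapp u, sum_inner]
    have h1 : ∑ i, ⟪(β * p i * ⟪w i - x, u⟫) • w i, v⟫
        = ∑ i, β * p i * ⟪w i - x, u⟫ * ⟪w i, v⟫ :=
      Finset.sum_congr rfl fun i _ => real_inner_smul_left _ _ _
    rw [h1]
    have h2 : ∑ i, β * p i * ⟪w i - x, u⟫ * ⟪x, v⟫
        = β * (∑ i, p i * ⟪w i - x, u⟫) * ⟪x, v⟫ := by
      rw [Finset.mul_sum, Finset.sum_mul]
      exact Finset.sum_congr rfl fun i _ => by ring
    have h3 : ∑ i, β * p i * ⟪w i - x, u⟫ * ⟪x, v⟫ = 0 := by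
      rw [h2, hzero u]; ring
    calc ∑ i, β * p i * ⟪w i - x, u⟫ * ⟪w i, v⟫
        = (∑ i, β * p i * ⟪w i - x, u⟫ * ⟪w i, v⟫) - ∑ i, β * p i * ⟪w i - x, u⟫ * ⟪x, v⟫ := by
          rw [h3]; ring
      _ = ∑ i, β * p i * ⟪w i - x, u⟫ * ⟪w i - x, v⟫ := by
          rw [← Finset.sum_sub_distrib]
          exact Finset.sum_congr rfl fun i _ => by rw [inner_sub_left (w i) x v]; ring
  have hsymm : (↑K : EuclideanSpace ℝ (Fin d) →ₗ[ℝ] EuclideanSpace ℝ (Fin d)).IsSymmetric := by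
    intro u v
    show ⟪K u, v⟫ = ⟪u, K v⟫
    rw [hKinner u v]
    conv_rhs => rw [real_inner_comm]
    rw [hKinner v u]
    exact Finset.sum_congr rfl fun i _ => by ring
  -- the test direction
  have hω0 : 0 ≤ ω := le_trans (abs_nonneg _) (hωb j k hjk)
  have hjkin : ⟪w j, w k⟫ ≤ ω := le_trans (le_abs_self _) (hωb j k hjk)
  have hnsq : ‖w j - w k‖ ^ 2 = 2 - 2 * ⟪w j, w k⟫ := by
    rw [norm_sub_sq_real, hw j, hw k]; ring
  have hnlb : 2 * (1 - ω) ≤ ‖w j - w k‖ ^ 2 := by rw [hnsq]; linarith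
  have hnpos : 0 < ‖w j - w k‖ := by
    nlinarith [norm_nonneg (w j - w k)]
  set u : EuclideanSpace ℝ (Fin d) := ‖w j - w k‖⁻¹ • (w j - w k) with hu
  have hun : ‖u‖ = 1 := by
    rw [hu, norm_smul, norm_inv, norm_norm]
    field_simp
  have hune : u ≠ 0 := by
    intro h0
    rw [h0, norm_zero] at hun
    norm_num at hun
  have hcjk : ⟪w j - w k, u⟫ = ‖w j - w k‖ := by
    rw [hu, real_inner_smul_right, real_inner_self_eq_norm_sq]
    field_simp
  have hterm : ∀ i, 0 ≤ β * p i * ⟪w i - x, u⟫ * ⟪w i - x, u⟫ := by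
    intro i
    calc (0:ℝ) ≤ β * p i * (⟪w i - x, u⟫ * ⟪w i - x, u⟫) :=
          mul_nonneg (mul_nonneg hβpos.le (hp0 i)) (mul_self_nonneg _)
      _ = β * p i * ⟪w i - x, u⟫ * ⟪w i - x, u⟫ := by ring
  have hmain : 1 < ⟪K u, u⟫ := by
    rw [hKinner u u]
    have hsub : (∑ i ∈ ({j, k} : Finset (Fin n)), β * p i * ⟪w i - x, u⟫ * ⟪w i - x, u⟫)
        ≤ ∑ i, β * p i * ⟪w i - x, u⟫ * ⟪w i - x, u⟫ :=
      Finset.sum_le_sum_of_subset_of_nonneg (Finset.subset_univ _) fun i _ _ => hterm i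
    rw [Finset.sum_pair hjk] at hsub
    have hdiff : ⟪w j - x, u⟫ - ⟪w k - x, u⟫ = ‖w j - w k‖ := by
      have h6 : ⟪w j - x, u⟫ - ⟪w k - x, u⟫ = ⟪w j - w k, u⟫ := by
        rw [← inner_sub_left]
        congr 1
        abel
      rw [h6, hcjk]
    have ht : (0:ℝ) < 1 - ω := by linarith
    have h4 : 4 < β * (a * (1 - ω) ^ 2) :=
      (div_lt_iff₀ (mul_pos ha (pow_pos ht 2))).mp hβ
    refine lt_of_lt_of_le ?_ hsub
    exact key_ineq β a ω _ _ _ _ hβpos ha hω0 hω h4 hpj hpk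
      (by rw [hdiff]; exact hnlb)
  -- eigenvalue via Rayleigh quotient
  haveI : Nontrivial (EuclideanSpace ℝ (Fin d)) := by
    refine nontrivial_of_ne (w j) 0 fun h0 => ?_
    have h1 := hw j
    rw [h0, norm_zero] at h1
    norm_num at h1
  have heig := LinearMap.IsSymmetric.hasEigenvalue_iSup_of_finiteDimensional hsymm
  set lam : ℝ := ⨆ v : {v : EuclideanSpace ℝ (Fin d) // v ≠ 0},
      RCLike.re ⟪(↑K : EuclideanSpace ℝ (Fin d) →ₗ[ℝ] EuclideanSpace ℝ (Fin d)) v, (v : EuclideanSpace ℝ (Fin d))⟫ / ‖(v : EuclideanSpace ℝ (Fin d))‖ ^ 2 with hlam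
  have hBdd : BddAbove (Set.range fun v : {v : EuclideanSpace ℝ (Fin d) // v ≠ 0} =>
      RCLike.re ⟪(↑K : EuclideanSpace ℝ (Fin d) →ₗ[ℝ] EuclideanSpace ℝ (Fin d)) v, (v : EuclideanSpace ℝ (Fin d))⟫ / ‖(v : EuclideanSpace ℝ (Fin d))‖ ^ 2) := by
    refine ⟨‖K‖, ?_⟩
    rintro r ⟨y, rfl⟩
    have hy : 0 < ‖(y : EuclideanSpace ℝ (Fin d))‖ := norm_pos_iff.mpr y.2
    have h1 : ⟪K (y : EuclideanSpace ℝ (Fin d)), (y : EuclideanSpace ℝ (Fin d))⟫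
        ≤ ‖K (y : EuclideanSpace ℝ (Fin d))‖ * ‖(y : EuclideanSpace ℝ (Fin d))‖ :=
      real_inner_le_norm _ _
    have h2 : ‖K (y : EuclideanSpace ℝ (Fin d))‖ ≤ ‖K‖ * ‖(y : EuclideanSpace ℝ (Fin d))‖ :=
      K.le_opNorm _
    have h3 : ⟪K (y : EuclideanSpace ℝ (Fin d)), (y : EuclideanSpace ℝ (Fin d))⟫
        ≤ ‖K‖ * ‖(y : EuclideanSpace ℝ (Fin d))‖ ^ 2 := by nlinarith
    simp only [RCLike.re_to_real]
    rw [div_le_iff₀ (by positivity)]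
    exact h3
  have hlam1 : 1 < lam := by
    have hle := le_ciSup hBdd ⟨u, hune⟩
    refine lt_of_lt_of_le hmain ?_
    simpa [hun, hlam] using hle
  have hmem : lam ∈ spectrum ℝ K := by
    rw [spectrum.mem_iff]
    intro hunit
    obtain ⟨v, hv⟩ := heig.exists_hasEigenvector
    have hKv : K v = lam • v := hv.apply_eq_smul
    have h0 : (algebraMap ℝ (EuclideanSpace ℝ (Fin d) →L[ℝ] EuclideanSpace ℝ (Fin d)) lam - K) v = 0 := by
      rw [ContinuousLinearMap.sub_apply, Algebra.algebraMap_eq_smul_one,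
        ContinuousLinearMap.smul_apply, ContinuousLinearMap.one_apply, hKv, sub_self]
    obtain ⟨U, hU⟩ := hunit
    have h2 := congrArg (fun f : EuclideanSpace ℝ (Fin d) →L[ℝ] EuclideanSpace ℝ (Fin d) => f v) U.inv_mul
    simp only [hU, ContinuousLinearMap.mul_apply, h0, map_zero, ContinuousLinearMap.one_apply] at h2
    exact hv.2 h2.symm
  have hub : (‖lam‖₊ : ENNReal) ≤ spectralRadius ℝ K :=
    le_iSup₂ (f := fun k (_ : k ∈ spectrum ℝ K) => (‖k‖₊ : ENNReal)) lam hmem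
  refine lt_of_lt_of_le ?_ hub
  have h5 : (1:ℝ) < ‖lam‖ := by
    rw [Real.norm_eq_abs]
    exact lt_of_lt_of_le hlam1 (le_abs_self _)
  have h6 : (1:NNReal) < ‖lam‖₊ := by
    rw [← NNReal.coe_lt_coe, coe_nnnorm]
    simpa using h5
  exact_mod_cast ENNReal.coe_lt_coe.mpr h6
end
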